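/- Let C₋, C₊ be isotropic elasticity tensors on Sym₃ with Lamé parameters (λ₋, μ₋) and (λ₊, μ₊), μ∓ > 0 and 3λ∓ + 2μ∓ > 0, let ν∓ = λ∓/(2(λ∓+μ∓)), and let ⟦C⟧ = C₊ − C₋. For each unit vector n ∈ ℝ³ define K₋(n) using (μ₋, ν₋) and K₊(n) using (μ₊, ν₊). Then for every unit vector n, the operator identity K₋(n)∘⟦C⟧∘K₊(n) = K₊(n)∘⟦C⟧∘K₋(n) = K₋(n) − K₊(n) holds on Sym₃; consequently (Id + K₋(n)∘⟦C⟧)∘(Id − K₊(n)∘⟦C⟧) = Id. -/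

import Mathlib

open Matrix

noncomputable section

/-- 3×3 real matrices; symmetric ones model Sym₃. -/
abbrev Mat := Matrix (Fin 3) (Fin 3) ℝ

/-- Inner product on matrices: a:b = tr(ab). -/
def inn (a b : Mat) : ℝ := (a * b).trace

/-- Isotropic elasticity tensor with Lamé parameters l, m: ε ↦ l(tr ε)E + 2mε. -/
def isoC (l m : ℝ) (e : Mat) : Mat := (l * e.trace) • (1 : Mat) + (2*m) • e

/-- The interface operator K(n) for material parameters (μ, ν):
K(n):q = (1/(2μ))(qₙ⊗n + n⊗qₙ − (qₙₙ/(1−ν)) n⊗n). -/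
def Kop (μ ν : ℝ) (n : Fin 3 → ℝ) (q : Mat) : Mat :=
  (1/(2*μ)) • (vecMulVec (q.mulVec n) n + vecMulVec n (q.mulVec n)
    - ((n ⬝ᵥ q.mulVec n)/(1-ν)) • vecMulVec n n)



section Aux

lemma vmv_mulVec (a b c : Fin 3 → ℝ) : (vecMulVec a b).mulVec c = (b ⬝ᵥ c) • a := by
  ext i
  simp [mulVec, vecMulVec_apply, dotProduct, Fin.sum_univ_three]
  ring

lemma trace_vmv (a b : Fin 3 → ℝ) : (vecMulVec a b).trace = a ⬝ᵥ b := by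
  simp [Matrix.trace, Matrix.diag, vecMulVec_apply, dotProduct]

lemma Kop_mulVec (μ ν : ℝ) (n : Fin 3 → ℝ) (hn : n ⬝ᵥ n = 1) (q : Mat) :
    (Kop μ ν n q).mulVec n
      = (1/(2*μ)) • q.mulVec n
        + ((1/(2*μ)) * ((n ⬝ᵥ q.mulVec n) * (1 - 1/(1-ν)))) • n := by
  simp only [Kop, smul_mulVec, add_mulVec, sub_mulVec, vmv_mulVec, hn,
    dotProduct_comm (q.mulVec n) n]
  module

lemma Kop_trace (μ ν : ℝ) (n : Fin 3 → ℝ) (hn : n ⬝ᵥ n = 1) (q : Mat) :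
    (Kop μ ν n q).trace
      = (1/(2*μ)) * ((n ⬝ᵥ q.mulVec n) * (2 - 1/(1-ν))) := by
  rw [Kop, trace_smul, trace_sub, trace_add, trace_smul, trace_vmv, trace_vmv,
    trace_vmv, hn, dotProduct_comm (q.mulVec n) n]
  simp only [smul_eq_mul]
  ring

lemma Kop_neg (μ ν : ℝ) (n : Fin 3 → ℝ) (a : Mat) :
    Kop μ ν n (-a) = -Kop μ ν n a := by
  ext i j
  simp [Kop, neg_mulVec, vecMulVec_apply, dotProduct, Fin.sum_univ_three,
    Matrix.add_apply, Matrix.sub_apply, Matrix.smul_apply, smul_eq_mul]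
  ring

lemma Kop_sub (μ ν : ℝ) (n : Fin 3 → ℝ) (a b : Mat) :
    Kop μ ν n (a - b) = Kop μ ν n a - Kop μ ν n b := by
  ext i j
  simp [Kop, sub_mulVec, vecMulVec_apply, dotProduct, Fin.sum_univ_three,
    Matrix.add_apply, Matrix.sub_apply, Matrix.smul_apply, smul_eq_mul]
  ring

set_option maxHeartbeats 1000000 in
lemma kunin_aux (l μ l' μ' : ℝ) (hμ : μ ≠ 0) (hμ' : μ' ≠ 0)
    (h1 : l + μ ≠ 0) (h2 : l + 2*μ ≠ 0) (h1' : l' + μ' ≠ 0) (h2' : l' + 2*μ' ≠ 0)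
    (ν ν' : ℝ) (hν : ν = l/(2*(l+μ))) (hν' : ν' = l'/(2*(l'+μ')))
    (n : Fin 3 → ℝ) (hn : n ⬝ᵥ n = 1) (q : Mat) :
    Kop μ ν n (isoC l' μ' (Kop μ' ν' n q) - isoC l μ (Kop μ' ν' n q))
      = Kop μ ν n q - Kop μ' ν' n q := by
  have hb : (1:ℝ) - ν = (l + 2*μ)/(2*(l+μ)) := by rw [hν]; field_simp; ring
  have hb' : (1:ℝ) - ν' = (l' + 2*μ')/(2*(l'+μ')) := by rw [hν']; field_simp; ring
  have hbne : (1:ℝ) - ν ≠ 0 := by rw [hb]; positivity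
  have hbne' : (1:ℝ) - ν' ≠ 0 := by rw [hb']; positivity
  set p := Kop μ' ν' n q with hp
  have hpv := Kop_mulVec μ' ν' n hn q
  have hpt := Kop_trace μ' ν' n hn q
  set s := n ⬝ᵥ q.mulVec n with hs
  have hargv : (isoC l' μ' p - isoC l μ p).mulVec n
      = ((μ' - μ)/μ') • q.mulVec n
        + ((l' - l) * ((1/(2*μ')) * (s * (2 - 1/(1-ν'))))
            + ((μ' - μ)/μ') * (s * (1 - 1/(1-ν')))) • n := by
    simp only [isoC, sub_mulVec, add_mulVec, smul_mulVec, one_mulVec, hp, hpv, hpt]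
    match_scalars <;> field_simp <;> ring
  have hargd : n ⬝ᵥ (isoC l' μ' p - isoC l μ p).mulVec n
      = ((μ' - μ)/μ') * s
        + ((l' - l) * ((1/(2*μ')) * (s * (2 - 1/(1-ν'))))
            + ((μ' - μ)/μ') * (s * (1 - 1/(1-ν')))) := by
    rw [hargv]
    simp [dotProduct_add, dotProduct_smul, hn, smul_eq_mul, ← hs]
  rw [show Kop μ ν n (isoC l' μ' p - isoC l μ p)
      = (1/(2*μ)) • (vecMulVec ((isoC l' μ' p - isoC l μ p).mulVec n) n
        + vecMulVec n ((isoC l' μ' p - isoC l μ p).mulVec n)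
        - ((n ⬝ᵥ (isoC l' μ' p - isoC l μ p).mulVec n)/(1-ν)) • vecMulVec n n) from rfl,
    hargd, hargv, hp]
  simp only [Kop]
  have hd : ∀ x : ℝ, x/(1-ν) = x*(2*(l+μ))/(l+2*μ) := by
    intro x; rw [hb, div_div_eq_mul_div]
  have hd' : ∀ x : ℝ, x/(1-ν') = x*(2*(l'+μ'))/(l'+2*μ') := by
    intro x; rw [hb', div_div_eq_mul_div]
  simp only [hd, hd', ← hs]
  ext i j
  simp only [vecMulVec_apply, Matrix.smul_apply, Matrix.add_apply, Matrix.sub_apply,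
    Pi.add_apply, Pi.smul_apply, smul_eq_mul]
  field_simp
  ring

lemma isoC_sub (l m : ℝ) (a b : Mat) : isoC l m (a - b) = isoC l m a - isoC l m b := by
  simp only [isoC, trace_sub]
  module

end Aux

/-- the Kunin identity K₋(n)∘⟦C⟧∘K₊(n) = K₊(n)∘⟦C⟧∘K₋(n) = K₋(n) − K₊(n)
on Sym₃, and consequently (Id + K₋(n)∘⟦C⟧)∘(Id − K₊(n)∘⟦C⟧) = Id. -/
theorem kunin_identity
    (lm μm lp μp : ℝ)
    (hμm : 0 < μm) (hkm : 0 < 3*lm + 2*μm) (hμp : 0 < μp) (hkp : 0 < 3*lp + 2*μp)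
    (νm νp : ℝ) (hνm : νm = lm/(2*(lm + μm))) (hνp : νp = lp/(2*(lp + μp)))
    (jump : Mat → Mat) (hjump : ∀ q : Mat, jump q = isoC lp μp q - isoC lm μm q)
    (n : Fin 3 → ℝ) (hn : n ⬝ᵥ n = 1) :
    ∀ q : Mat, q.IsSymm →
      Kop μm νm n (jump (Kop μp νp n q)) = Kop μm νm n q - Kop μp νp n q
      ∧ Kop μp νp n (jump (Kop μm νm n q)) = Kop μm νm n q - Kop μp νp n q
      ∧ (q - Kop μp νp n (jump q))
          + Kop μm νm n (jump (q - Kop μp νp n (jump q))) = q := by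
  have hμm0 : μm ≠ 0 := ne_of_gt hμm
  have hμp0 : μp ≠ 0 := ne_of_gt hμp
  have h1m : lm + μm ≠ 0 := by intro h; nlinarith
  have h2m : lm + 2*μm ≠ 0 := by intro h; nlinarith
  have h1p : lp + μp ≠ 0 := by intro h; nlinarith
  have h2p : lp + 2*μp ≠ 0 := by intro h; nlinarith
  have key1 : ∀ r : Mat, Kop μm νm n (jump (Kop μp νp n r))
      = Kop μm νm n r - Kop μp νp n r := by
    intro r
    rw [hjump]
    exact kunin_aux lm μm lp μp hμm0 hμp0 h1m h2m h1p h2p νm νp hνm hνp n hn r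
  have key2 : ∀ r : Mat, Kop μp νp n (jump (Kop μm νm n r))
      = Kop μm νm n r - Kop μp νp n r := by
    intro r
    rw [hjump, show isoC lp μp (Kop μm νm n r) - isoC lm μm (Kop μm νm n r)
        = -(isoC lm μm (Kop μm νm n r) - isoC lp μp (Kop μm νm n r)) by abel,
      Kop_neg,
      kunin_aux lp μp lm μm hμp0 hμm0 h1p h2p h1m h2m νp νm hνp hνm n hn r]
    abel
  intro q _
  refine ⟨key1 q, key2 q, ?_⟩
  have hJsub : jump (q - Kop μp νp n (jump q)) = jump q - jump (Kop μp νp n (jump q)) := by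
    simp only [hjump, isoC_sub]
    abel
  rw [hJsub, Kop_sub, key1 (jump q)]
  abel
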